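/- Let X, Y be normed linear spaces, S_1, T_1 : X ⇉ Y nonempty-valued and Lipschitz continuous with common modulus κ : ℝ₊ → ℝ₊ relative to ρ* ∈ [0,∞] (i.e., dl_{ρ*}(S_1(x), S_1(x')) ≤ κ(ρ)‖x−x'‖ for x,x' ∈ B_X(ρ), and similarly for T_1), and S_2, T_2 : X ⇉ Y with nonempty graphs. Suppose ρ ≥ 0, ρ' is such that S_1(x), T_1(x) ⊂ B_Y(ρ') for all x ∈ B_X(ρ), ρ̄ ≥ ρ + ρ', ρ̂ > ρ + dl_{ρ̄}(gph S_2, gph T_2), and ρ* > 3ρ' + κ(ρ̂)(ρ̂−ρ). Then dl_ρ(gph(S_1+S_2), gph(T_1+T_2)) ≤ sup_{x∈B_X(ρ)} dl_{ρ*}(S_1(x), T_1(x)) + (1+κ(ρ̂))·dl_{ρ̄}(gph S_2, gph T_2). -/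

import Mathlib

open Set Filter Metric ENNReal Pointwise Classical

noncomputable section

/-- Excess of `A` over `B`: `sup_{x ∈ A} dist(x,B)`, valued in `ℝ≥0∞`
(so it is `0` when `A = ∅` and `∞` when `A ≠ ∅`, `B = ∅`). -/
def exs {X : Type*} [PseudoEMetricSpace X] (A B : Set X) : ℝ≥0∞ :=
  ⨆ x ∈ A, EMetric.infEdist x B

/-- Truncated Hausdorff distance with centroid `c` and radius `ρ`. -/
def dl {X : Type*} [PseudoEMetricSpace X] (c : X) (ρ : ℝ≥0∞) (A B : Set X) : ℝ≥0∞ :=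
  max (exs (A ∩ EMetric.closedBall c ρ) B) (exs (B ∩ EMetric.closedBall c ρ) A)

/-- Epigraph of an extended-real-valued function. -/
def epi {X : Type*} (f : X → EReal) : Set (X × ℝ) :=
  {p | f p.1 ≤ (p.2 : EReal)}

/-- Absolute difference of extended reals, valued in `ℝ≥0∞`. -/
def eAbsDiff (a b : EReal) : ℝ≥0∞ :=
  sInf {ε : ℝ≥0∞ | a ≤ b + (ε : EReal) ∧ b ≤ a + (ε : EReal)}

lemma dl_comm' {X : Type*} [PseudoEMetricSpace X] (c : X) (r : ℝ≥0∞) (A B : Set X) :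
    dl c r A B = dl c r B A := max_comm _ _

lemma edist_add_add_le' {Y : Type*} [SeminormedAddCommGroup Y] (a b c d : Y) :
    edist (a + b) (c + d) ≤ edist a c + edist b d := by
  rw [edist_dist, edist_dist, edist_dist, ← ENNReal.ofReal_add dist_nonneg dist_nonneg]
  exact ENNReal.ofReal_le_ofReal (dist_add_add_le a b c d)

lemma infEdist_le_exs {X : Type*} [PseudoEMetricSpace X] {A B : Set X} {x : X}
    (hx : x ∈ A) : EMetric.infEdist x B ≤ exs A B :=
  le_iSup₂_of_le x hx le_rfl

lemma edist_norm {Y : Type*} [SeminormedAddCommGroup Y] (y : Y) :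
    edist y 0 = ENNReal.ofReal ‖y‖ := by rw [edist_dist, dist_zero_right]

/-- One-sided excess estimate. -/
lemma stmt19_side {X Y : Type*} [NormedAddCommGroup X] [NormedAddCommGroup Y]
    (S₁ T₁ S₂ T₂ : X → Set Y)
    (hS₁ne : ∀ x, (S₁ x).Nonempty) (hT₁ne : ∀ x, (T₁ x).Nonempty)
    (κ : ℝ → ℝ) (ρstar : ℝ≥0∞)
    (hT₁L : ∀ r : ℝ, 0 ≤ r → ∀ x ∈ Metric.closedBall (0 : X) r,
      ∀ x' ∈ Metric.closedBall (0 : X) r,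
        dl (0 : Y) ρstar (T₁ x) (T₁ x') ≤ ENNReal.ofReal (κ r * ‖x - x'‖))
    (ρ ρ' ρb ρh : ℝ) (hρ : 0 ≤ ρ) (hρ'0 : 0 ≤ ρ') (hκh : 0 ≤ κ ρh) (hρρh : ρ ≤ ρh)
    (hρ'S : ∀ x ∈ Metric.closedBall (0 : X) ρ, S₁ x ⊆ Metric.closedBall (0 : Y) ρ')
    (hρ'T : ∀ x ∈ Metric.closedBall (0 : X) ρ, T₁ x ⊆ Metric.closedBall (0 : Y) ρ')
    (hρb : ρb ≥ ρ + ρ')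
    (hρh : ENNReal.ofReal ρ +
      dl ((0 : X), (0 : Y)) (ENNReal.ofReal ρb)
        {p : X × Y | p.2 ∈ S₂ p.1} {p | p.2 ∈ T₂ p.1} < ENNReal.ofReal ρh)
    (h3ρ' : ENNReal.ofReal (3 * ρ') < ρstar) :
    exs ({p : X × Y | p.2 ∈ S₁ p.1 + S₂ p.1} ∩
        EMetric.closedBall ((0 : X), (0 : Y)) (ENNReal.ofReal ρ))
        {p : X × Y | p.2 ∈ T₁ p.1 + T₂ p.1}
      ≤ (⨆ x ∈ Metric.closedBall (0 : X) ρ, dl (0 : Y) ρstar (S₁ x) (T₁ x))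
        + (1 + ENNReal.ofReal (κ ρh)) *
          dl ((0 : X), (0 : Y)) (ENNReal.ofReal ρb)
            {p : X × Y | p.2 ∈ S₂ p.1} {p | p.2 ∈ T₂ p.1} := by
  set d : ℝ≥0∞ := dl ((0 : X), (0 : Y)) (ENNReal.ofReal ρb)
      {p : X × Y | p.2 ∈ S₂ p.1} {p | p.2 ∈ T₂ p.1} with hd
  set σ : ℝ≥0∞ := ⨆ x ∈ Metric.closedBall (0 : X) ρ, dl (0 : Y) ρstar (S₁ x) (T₁ x) with hσ
  set K : ℝ≥0∞ := ENNReal.ofReal (κ ρh) with hK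
  -- d is finite
  have hdtop : d ≠ ⊤ := by
    intro h
    rw [h, add_top] at hρh
    exact (not_top_lt hρh)
  have hdh : ρ + d.toReal < ρh := by
    have h1 : ENNReal.ofReal (ρ + d.toReal) < ENNReal.ofReal ρh := by
      rwa [ENNReal.ofReal_add hρ ENNReal.toReal_nonneg, ENNReal.ofReal_toReal hdtop]
    exact (ENNReal.ofReal_lt_ofReal_iff_of_nonneg (by positivity)).mp h1
  -- σ ≤ 2ρ'
  have hσ2 : σ ≤ ENNReal.ofReal (2 * ρ') := by
    rw [hσ]
    refine iSup₂_le fun x hx => ?_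
    have hb : ∀ A B : X → Set Y, (∀ x ∈ Metric.closedBall (0 : X) ρ, A x ⊆ Metric.closedBall (0 : Y) ρ')
        → (∀ x ∈ Metric.closedBall (0 : X) ρ, B x ⊆ Metric.closedBall (0 : Y) ρ')
        → (∀ x, (B x).Nonempty)
        → exs (A x ∩ EMetric.closedBall (0 : Y) ρstar) (B x) ≤ ENNReal.ofReal (2 * ρ') := by
      intro A B hA hB hBne
      refine iSup₂_le fun y hy => ?_
      obtain ⟨t, ht⟩ := hBne x
      refine le_trans (EMetric.infEdist_le_edist_of_mem ht) ?_
      rw [edist_dist]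
      refine ENNReal.ofReal_le_ofReal ?_
      have h1 : ‖y‖ ≤ ρ' := by
        have := hA x hx hy.1
        simpa [mem_closedBall, dist_zero_right] using this
      have h2 : ‖t‖ ≤ ρ' := by
        have := hB x hx ht
        simpa [mem_closedBall, dist_zero_right] using this
      calc dist y t = ‖y - t‖ := dist_eq_norm y t
        _ ≤ ‖y‖ + ‖t‖ := norm_sub_le y t
        _ ≤ 2 * ρ' := by linarith
    exact max_le (hb S₁ T₁ hρ'S hρ'T hT₁ne) (hb T₁ S₁ hρ'T hρ'S hS₁ne)
  have hσtop : σ ≠ ⊤ := (lt_of_le_of_lt hσ2 ENNReal.ofReal_lt_top).ne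
  -- main: bound the excess pointwise
  refine iSup₂_le fun p hp => ?_
  obtain ⟨hpmem, hpball⟩ := hp
  obtain ⟨x, y⟩ := p
  obtain ⟨y₁, hy₁0, y₂, hy₂0, hsum0⟩ := Set.mem_add.mp hpmem
  have hy₁ : y₁ ∈ S₁ x := hy₁0
  have hy₂ : y₂ ∈ S₂ x := hy₂0
  have hsum : y₁ + y₂ = y := hsum0
  have hpb := hpball
  rw [EMetric.closedBall, Metric.mem_closedEBall, Prod.edist_eq] at hpb
  have hxρ : ‖x‖ ≤ ρ := by
    have := le_trans (le_max_left _ _) hpb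
    rw [edist_norm] at this
    exact (ENNReal.ofReal_le_ofReal_iff hρ).mp this
  have hyρ : ‖y‖ ≤ ρ := by
    have := le_trans (le_max_right _ _) hpb
    rw [edist_norm] at this
    exact (ENNReal.ofReal_le_ofReal_iff hρ).mp this
  have hxball : x ∈ Metric.closedBall (0 : X) ρ := by
    simpa [mem_closedBall, dist_zero_right] using hxρ
  apply ENNReal.le_of_forall_pos_le_add
  intro ε hε _
  -- choose δ
  have hεR : (0 : ℝ) < (ε : ℝ) := hε
  set c : ℝ := 3 + κ ρh with hc
  have hcpos : 0 < c := by positivity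
  obtain ⟨δ₁, hδ₁pos, hδ₁⟩ : ∃ δ₁ > 0, ENNReal.ofReal (3 * ρ' + δ₁) ≤ ρstar := by
    rcases eq_or_ne ρstar ⊤ with h | h
    · exact ⟨1, one_pos, by rw [h]; exact le_top⟩
    · refine ⟨ρstar.toReal - 3 * ρ', ?_, ?_⟩
      · have := (ENNReal.ofReal_lt_iff_lt_toReal (by positivity) h).mp h3ρ'
        linarith
      · rw [show 3 * ρ' + (ρstar.toReal - 3 * ρ') = ρstar.toReal by ring]
        exact ENNReal.ofReal_toReal_le
  set δ : ℝ := min δ₁ (min (ρh - (ρ + d.toReal)) ((ε : ℝ) / c)) with hδdef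
  have hδpos : 0 < δ := by
    apply lt_min hδ₁pos
    apply lt_min (by linarith) (by positivity)
  have hδ1 : δ ≤ δ₁ := min_le_left _ _
  have hδ2 : δ ≤ ρh - (ρ + d.toReal) := le_trans (min_le_right _ _) (min_le_left _ _)
  have hδ3 : δ ≤ (ε : ℝ) / c := le_trans (min_le_right _ _) (min_le_right _ _)
  set Δ : ℝ≥0∞ := ENNReal.ofReal δ with hΔ
  have hΔpos : Δ ≠ 0 := (ENNReal.ofReal_pos.mpr hδpos).ne'
  -- step 1: project (x, y₂) onto gph T₂
  have hy₁ρ' : ‖y₁‖ ≤ ρ' := by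
    have := hρ'S x hxball hy₁
    simpa [mem_closedBall, dist_zero_right] using this
  have hy₂n : ‖y₂‖ ≤ ρ + ρ' := by
    have : y₂ = y - y₁ := by rw [← hsum]; abel
    rw [this]
    calc ‖y - y₁‖ ≤ ‖y‖ + ‖y₁‖ := norm_sub_le y y₁
      _ ≤ ρ + ρ' := by linarith
  have hmem2 : (x, y₂) ∈ {p : X × Y | p.2 ∈ S₂ p.1} ∩
      EMetric.closedBall ((0 : X), (0 : Y)) (ENNReal.ofReal ρb) := by
    refine ⟨hy₂, ?_⟩
    rw [EMetric.closedBall, Metric.mem_closedEBall, Prod.edist_eq]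
    refine max_le ?_ ?_
    · rw [edist_norm]; exact ENNReal.ofReal_le_ofReal (by linarith)
    · rw [edist_norm]; exact ENNReal.ofReal_le_ofReal (by linarith)
  have h1a : EMetric.infEdist (x, y₂) {p : X × Y | p.2 ∈ T₂ p.1} ≤ d := by
    rw [hd, dl]
    exact le_trans (infEdist_le_exs hmem2) (le_max_left _ _)
  have h1 : EMetric.infEdist (x, y₂) {p : X × Y | p.2 ∈ T₂ p.1} < d + Δ :=
    lt_of_le_of_lt h1a (ENNReal.lt_add_right hdtop hΔpos)
  obtain ⟨q, hq, hq2⟩ := EMetric.infEdist_lt_iff.mp h1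
  obtain ⟨x', y₂'⟩ := q
  rw [Prod.edist_eq, max_lt_iff] at hq2
  have hxx' : edist x x' ≤ d + Δ := hq2.1.le
  have hy₂y₂' : edist y₂ y₂' ≤ d + Δ := hq2.2.le
  have hxx'r : ‖x - x'‖ ≤ d.toReal + δ := by
    have h2 : edist x x' = ENNReal.ofReal ‖x - x'‖ := by
      rw [edist_dist, dist_eq_norm]
    rw [h2] at hxx'
    have h3 : d + Δ = ENNReal.ofReal (d.toReal + δ) := by
      rw [ENNReal.ofReal_add ENNReal.toReal_nonneg hδpos.le, ENNReal.ofReal_toReal hdtop]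
    rw [h3] at hxx'
    exact (ENNReal.ofReal_le_ofReal_iff (by positivity)).mp hxx'
  have hx'h : x' ∈ Metric.closedBall (0 : X) ρh := by
    rw [mem_closedBall, dist_zero_right]
    have hxid : x - (x - x') = x' := by abel
    calc ‖x'‖ = ‖x - (x - x')‖ := by rw [hxid]
      _ ≤ ‖x‖ + ‖x - x'‖ := norm_sub_le _ _
      _ ≤ ρ + (d.toReal + δ) := by linarith
      _ ≤ ρh := by linarith
  have hxh : x ∈ Metric.closedBall (0 : X) ρh := by
    rw [mem_closedBall, dist_zero_right]; linarith
  -- step 2: from y₁ to y₁'' ∈ T₁ x, then to y₁' ∈ T₁ x'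
  have hy₁star : y₁ ∈ EMetric.closedBall (0 : Y) ρstar := by
    rw [EMetric.closedBall, Metric.mem_closedEBall, edist_norm]
    exact le_trans (ENNReal.ofReal_le_ofReal (by linarith)) h3ρ'.le
  have h2 : EMetric.infEdist y₁ (T₁ x) ≤ σ := by
    have hA : dl (0 : Y) ρstar (S₁ x) (T₁ x) ≤ σ := le_iSup₂_of_le x hxball le_rfl
    rw [dl] at hA
    exact le_trans (le_trans (infEdist_le_exs (Set.mem_inter hy₁ hy₁star)) (le_max_left _ _)) hA
  obtain ⟨y₁'', hy₁''mem, hy₁''⟩ := EMetric.infEdist_lt_iff.mp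
    (lt_of_le_of_lt h2 (ENNReal.lt_add_right hσtop hΔpos))
  have hy₁''star : y₁'' ∈ EMetric.closedBall (0 : Y) ρstar := by
    rw [EMetric.closedBall, Metric.mem_closedEBall]
    calc edist y₁'' 0 ≤ edist y₁'' y₁ + edist y₁ 0 := edist_triangle _ _ _
      _ ≤ (σ + Δ) + ENNReal.ofReal ρ' := by
          rw [edist_comm, edist_norm]
          exact add_le_add hy₁''.le (ENNReal.ofReal_le_ofReal hy₁ρ')
      _ ≤ ENNReal.ofReal (2 * ρ') + ENNReal.ofReal δ + ENNReal.ofReal ρ' := by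
          exact add_le_add (add_le_add hσ2 le_rfl) le_rfl
      _ = ENNReal.ofReal (3 * ρ' + δ) := by
          rw [← ENNReal.ofReal_add (by positivity) hδpos.le,
            ← ENNReal.ofReal_add (by positivity) hρ'0]
          ring_nf
      _ ≤ ENNReal.ofReal (3 * ρ' + δ₁) := ENNReal.ofReal_le_ofReal (by linarith)
      _ ≤ ρstar := hδ₁
  have h3 : EMetric.infEdist y₁'' (T₁ x') ≤ ENNReal.ofReal (κ ρh * ‖x - x'‖) := by
    have hA := hT₁L ρh (by linarith) x hxh x' hx'h
    rw [dl] at hA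
    exact le_trans (le_trans (infEdist_le_exs (Set.mem_inter hy₁''mem hy₁''star))
      (le_max_left _ _)) hA
  obtain ⟨y₁', hy₁'mem, hy₁'⟩ := EMetric.infEdist_lt_iff.mp
    (lt_of_le_of_lt h3 (ENNReal.lt_add_right ENNReal.ofReal_ne_top hΔpos))
  have hLip : ENNReal.ofReal (κ ρh * ‖x - x'‖) ≤ K * (d + Δ) := by
    rw [ENNReal.ofReal_mul hκh, hK]
    refine mul_le_mul_right ?_ _
    rw [show ‖x - x'‖ = dist x x' from (dist_eq_norm x x').symm, ← edist_dist]
    exact hxx'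
  -- step 3: combine
  have hmemT : (x', y₁' + y₂') ∈ {p : X × Y | p.2 ∈ T₁ p.1 + T₂ p.1} :=
    Set.add_mem_add hy₁'mem hq
  have hfin : (3 + K) * Δ ≤ (ε : ℝ≥0∞) := by
    have h3K : (3 : ℝ≥0∞) + K = ENNReal.ofReal c := by
      rw [hc, ENNReal.ofReal_add (by norm_num) hκh, hK]
      norm_num
    rw [h3K, ← ENNReal.ofReal_mul hcpos.le, ← ENNReal.ofReal_coe_nnreal]
    refine ENNReal.ofReal_le_ofReal ?_
    calc c * δ ≤ c * ((ε : ℝ) / c) := by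
          exact mul_le_mul_of_nonneg_left hδ3 hcpos.le
      _ = (ε : ℝ) := by field_simp
  calc EMetric.infEdist (x, y) {p : X × Y | p.2 ∈ T₁ p.1 + T₂ p.1}
      ≤ edist (x, y) (x', y₁' + y₂') := EMetric.infEdist_le_edist_of_mem hmemT
    _ = max (edist x x') (edist y (y₁' + y₂')) := Prod.edist_eq _ _
    _ ≤ σ + (1 + K) * d + (ε : ℝ≥0∞) := by
        refine max_le ?_ ?_
        · refine le_trans hxx' ?_
          refine add_le_add ?_ ?_
          · calc d = 1 * d := (one_mul d).symm
              _ ≤ (1 + K) * d := mul_le_mul_left le_self_add _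
              _ ≤ σ + (1 + K) * d := le_add_self
          · refine le_trans ?_ hfin
            calc Δ = 1 * Δ := (one_mul Δ).symm
              _ ≤ (3 + K) * Δ := mul_le_mul_left
                  (le_trans (by norm_num : (1:ℝ≥0∞) ≤ 3) le_self_add) _
        · calc edist y (y₁' + y₂') = edist (y₁ + y₂) (y₁' + y₂') := by rw [hsum]
            _ ≤ edist y₁ y₁' + edist y₂ y₂' := edist_add_add_le' _ _ _ _
            _ ≤ (edist y₁ y₁'' + edist y₁'' y₁') + edist y₂ y₂' := by
                exact add_le_add_left (edist_triangle _ _ _) _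
            _ ≤ ((σ + Δ) + (K * (d + Δ) + Δ)) + (d + Δ) := by
                refine add_le_add (add_le_add hy₁''.le ?_) hy₂y₂'
                exact le_trans hy₁'.le (add_le_add_left hLip _)
            _ = σ + (1 + K) * d + (3 + K) * Δ := by ring
            _ ≤ σ + (1 + K) * d + (ε : ℝ≥0∞) := add_le_add_right hfin _

/-- sums of set-valued mappings under a Lipschitz property. -/
theorem stmt19 {X Y : Type*} [NormedAddCommGroup X] [NormedAddCommGroup Y]
    (S₁ T₁ S₂ T₂ : X → Set Y)
    (hS₁ne : ∀ x, (S₁ x).Nonempty) (hT₁ne : ∀ x, (T₁ x).Nonempty)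
    (κ : ℝ → ℝ) (hκ : ∀ r, 0 ≤ κ r) (ρstar : ℝ≥0∞)
    (hS₁L : ∀ r : ℝ, 0 ≤ r → ∀ x ∈ Metric.closedBall (0 : X) r,
      ∀ x' ∈ Metric.closedBall (0 : X) r,
        dl (0 : Y) ρstar (S₁ x) (S₁ x') ≤ ENNReal.ofReal (κ r * ‖x - x'‖))
    (hT₁L : ∀ r : ℝ, 0 ≤ r → ∀ x ∈ Metric.closedBall (0 : X) r,
      ∀ x' ∈ Metric.closedBall (0 : X) r,
        dl (0 : Y) ρstar (T₁ x) (T₁ x') ≤ ENNReal.ofReal (κ r * ‖x - x'‖))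
    (hGS₂ : {p : X × Y | p.2 ∈ S₂ p.1}.Nonempty) (hGT₂ : {p : X × Y | p.2 ∈ T₂ p.1}.Nonempty)
    (ρ ρ' ρb ρh : ℝ) (hρ : 0 ≤ ρ)
    (hρ'S : ∀ x ∈ Metric.closedBall (0 : X) ρ, S₁ x ⊆ Metric.closedBall (0 : Y) ρ')
    (hρ'T : ∀ x ∈ Metric.closedBall (0 : X) ρ, T₁ x ⊆ Metric.closedBall (0 : Y) ρ')
    (hρb : ρb ≥ ρ + ρ')
    (hρh : ENNReal.ofReal ρh > ENNReal.ofReal ρ +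
      dl ((0 : X), (0 : Y)) (ENNReal.ofReal ρb)
        {p : X × Y | p.2 ∈ S₂ p.1} {p | p.2 ∈ T₂ p.1})
    (hρstar : ρstar > ENNReal.ofReal (3 * ρ' + κ ρh * (ρh - ρ))) :
    dl ((0 : X), (0 : Y)) (ENNReal.ofReal ρ)
        {p : X × Y | p.2 ∈ S₁ p.1 + S₂ p.1} {p | p.2 ∈ T₁ p.1 + T₂ p.1}
      ≤ (⨆ x ∈ Metric.closedBall (0 : X) ρ, dl (0 : Y) ρstar (S₁ x) (T₁ x))
        + (1 + ENNReal.ofReal (κ ρh)) *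
          dl ((0 : X), (0 : Y)) (ENNReal.ofReal ρb)
            {p : X × Y | p.2 ∈ S₂ p.1} {p | p.2 ∈ T₂ p.1} := by
  -- basic derived facts
  have hρ'0 : 0 ≤ ρ' := by
    obtain ⟨yy, hyy⟩ := hS₁ne 0
    have h0 : (0 : X) ∈ Metric.closedBall (0 : X) ρ := by
      simpa [mem_closedBall] using hρ
    have := hρ'S 0 h0 hyy
    rw [mem_closedBall, dist_zero_right] at this
    exact le_trans (norm_nonneg yy) this
  have hρρh : ρ < ρh := by
    have h1 : ENNReal.ofReal ρ < ENNReal.ofReal ρh := lt_of_le_of_lt le_self_add hρh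
    exact (ENNReal.ofReal_lt_ofReal_iff_of_nonneg hρ).mp h1
  have h3ρ' : ENNReal.ofReal (3 * ρ') < ρstar := by
    refine lt_of_le_of_lt (ENNReal.ofReal_le_ofReal ?_) hρstar
    have : 0 ≤ κ ρh * (ρh - ρ) := mul_nonneg (hκ ρh) (by linarith)
    linarith
  rw [dl]
  refine max_le ?_ ?_
  · exact stmt19_side S₁ T₁ S₂ T₂ hS₁ne hT₁ne κ ρstar hT₁L ρ ρ' ρb ρh hρ hρ'0 (hκ ρh)
      hρρh.le hρ'S hρ'T hρb hρh h3ρ'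
  · have hcomm : dl ((0 : X), (0 : Y)) (ENNReal.ofReal ρb)
        {p : X × Y | p.2 ∈ T₂ p.1} {p | p.2 ∈ S₂ p.1}
        = dl ((0 : X), (0 : Y)) (ENNReal.ofReal ρb)
        {p : X × Y | p.2 ∈ S₂ p.1} {p | p.2 ∈ T₂ p.1} := dl_comm' _ _ _ _
    have hσcomm : (⨆ x ∈ Metric.closedBall (0 : X) ρ, dl (0 : Y) ρstar (T₁ x) (S₁ x))
        = ⨆ x ∈ Metric.closedBall (0 : X) ρ, dl (0 : Y) ρstar (S₁ x) (T₁ x) := by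
      exact iSup_congr fun x => iSup_congr fun _ => dl_comm' _ _ _ _
    have := stmt19_side T₁ S₁ T₂ S₂ hT₁ne hS₁ne κ ρstar hS₁L ρ ρ' ρb ρh hρ hρ'0 (hκ ρh)
      hρρh.le hρ'T hρ'S hρb (by rwa [hcomm]) h3ρ'
    rwa [hcomm, hσcomm] at this
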